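/- Let V be a valuation domain with quotient field K and let E = {s_ν}, F = {t_ν} be pseudo-stationary sequences in K with breadths δ_E and δ_F respectively. Then V_E = V_F if and only if δ_E = δ_F = δ and v(s_ν − t_μ) ≥ δ for all ν, μ. -/

import Mathlib

open scoped Pointwise Classical

section Defs

variable {K : Type*} [Field K] {Γ : Type*} [LinearOrderedCommGroupWithZero Γ]
variable {Λ : Type*} [LinearOrder Λ]

/-- `E = {s ν}` is pseudo-convergent: (additively) `v(s_ρ−s_ν) < v(s_σ−s_ρ)` for `ν<ρ<σ`.
In Mathlib's multiplicative convention this reads `v (s σ - s ρ) < v (s ρ - s ν)`. -/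
def IsPseudoConvergent (v : Valuation K Γ) (s : Λ → K) : Prop :=
  ∀ ⦃ν ρ σ : Λ⦄, ν < ρ → ρ < σ → v (s σ - s ρ) < v (s ρ - s ν)

/-- `E = {s ν}` is pseudo-divergent: (additively) `v(s_ρ−s_ν) > v(s_σ−s_ρ)` for `ν<ρ<σ`. -/
def IsPseudoDivergent (v : Valuation K Γ) (s : Λ → K) : Prop :=
  ∀ ⦃ν ρ σ : Λ⦄, ν < ρ → ρ < σ → v (s ρ - s ν) < v (s σ - s ρ)

/-- `E = {s ν}` is pseudo-stationary: the terms are distinct and all pairwise differences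
have the same (nonzero) value. -/
def IsPseudoStationary (v : Valuation K Γ) (s : Λ → K) : Prop :=
  (∀ ⦃ν μ : Λ⦄, ν ≠ μ → s ν ≠ s μ) ∧
    ∀ ⦃ν μ ν' μ' : Λ⦄, ν ≠ μ → ν' ≠ μ' → v (s ν - s μ) = v (s ν' - s μ')

/-- A pseudo-monotone sequence: pseudo-convergent, pseudo-divergent or pseudo-stationary. -/
def IsPseudoMonotone (v : Valuation K Γ) (s : Λ → K) : Prop :=
  IsPseudoConvergent v s ∨ IsPseudoDivergent v s ∨ IsPseudoStationary v s

/-- `α` is a pseudo-limit of the pseudo-convergent sequence `s`: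
`v(α − s_ν) = δ_ν` for all `ν`, where `δ_ν = v(s_ρ − s_ν)` for any `ρ > ν`. -/
def IsPseudoLimitPcv (v : Valuation K Γ) (s : Λ → K) (α : K) : Prop :=
  ∀ ⦃ν ρ : Λ⦄, ν < ρ → v (α - s ν) = v (s ρ - s ν)

/-- `α` is a pseudo-limit of the pseudo-divergent sequence `s`:
`v(α − s_ν) = δ_ν` for all sufficiently large `ν`, where `δ_ν = v(s_ρ − s_ν)` for any `ρ < ν`. -/
def IsPseudoLimitPdv (v : Valuation K Γ) (s : Λ → K) (α : K) : Prop :=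
  ∃ N : Λ, ∀ ⦃ν : Λ⦄, N ≤ ν → ∀ ⦃ρ : Λ⦄, ρ < ν → v (α - s ν) = v (s ρ - s ν)

/-- `α` is a pseudo-limit of the pseudo-stationary sequence `s`:
`v(α − s_ν) = δ` for all sufficiently large `ν`, where `δ` is the breadth. -/
def IsPseudoLimitPst (v : Valuation K Γ) (s : Λ → K) (α : K) : Prop :=
  ∃ N : Λ, ∀ ⦃ν : Λ⦄, N ≤ ν → ∀ ⦃μ μ' : Λ⦄, μ ≠ μ' → v (α - s ν) = v (s μ - s μ')

/-- `α` is a pseudo-limit of a strictly pseudo-monotone sequence `s`. -/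
def IsPseudoLimitSPM (v : Valuation K Γ) (s : Λ → K) (α : K) : Prop :=
  (IsPseudoConvergent v s ∧ IsPseudoLimitPcv v s α) ∨
    (IsPseudoDivergent v s ∧ IsPseudoLimitPdv v s α)

/-- The breadth ideal of a pseudo-convergent sequence:
(additively) `{x : v(x) > δ_ν for all ν}`. -/
def BreadthPcv (v : Valuation K Γ) (s : Λ → K) : Set K :=
  {x : K | ∀ ⦃ν ρ : Λ⦄, ν < ρ → v x < v (s ρ - s ν)}

/-- The breadth ideal of a pseudo-divergent sequence:
(additively) `{x : v(x) > δ_ν for some ν}`. -/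
def BreadthPdv (v : Valuation K Γ) (s : Λ → K) : Set K :=
  {x : K | ∃ ν ρ : Λ, ρ < ν ∧ v x < v (s ρ - s ν)}

/-- The breadth ideal of a pseudo-stationary sequence: (additively) `{x : v(x) ≥ δ}`. -/
def BreadthPst (v : Valuation K Γ) (s : Λ → K) : Set K :=
  {x : K | ∀ ⦃ν μ : Λ⦄, ν ≠ μ → v x ≤ v (s ν - s μ)}

/-- The breadth ideal of a sequence which is definitively either pseudo-convergent or
pseudo-stationary: `{x : v(x) ≤ v(s ρ - s ν)` for all sufficiently large `ν < ρ}`. -/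
def BreadthCvStat (v : Valuation K Γ) (s : Λ → K) : Set K :=
  {x : K | ∃ N : Λ, ∀ ⦃ν ρ : Λ⦄, N ≤ ν → ν < ρ → v x ≤ v (s ρ - s ν)}

/-- The ring `V_E` of rational functions mapping the tail of `E` into the valuation ring,
as a subset of `K(X)`. -/
def VESet (v : Valuation K Γ) (s : Λ → K) : Set (RatFunc K) :=
  {φ : RatFunc K | ∃ N : Λ, ∀ ⦃ν : Λ⦄, N ≤ ν → v (RatFunc.eval (RingHom.id K) (s ν) φ) ≤ 1}

end Defs

section FracIdeals

variable {K : Type*} [Field K]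

/-- `I` is a fractional ideal of the valuation subring `A` of `K`. -/
def IsFractionalSub (A : ValuationSubring K) (I : Submodule A K) : Prop :=
  ∃ a : K, a ∈ A ∧ a ≠ 0 ∧ ∀ x ∈ I, a * x ∈ A

/-- `I` is strictly divisorial: it equals the intersection of all principal fractional
ideals properly containing it. -/
def IsStrictlyDivisorial (A : ValuationSubring K) (I : Submodule A K) : Prop :=
  I = ⨅ c ∈ {c : K | I < Submodule.span A {c}}, Submodule.span A {c}

end FracIdeals

section Aux2

variable {K : Type*} [Field K] {Γ : Type*} [LinearOrderedCommGroupWithZero Γ]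
variable {Λ : Type*} [LinearOrder Λ]



lemma stmt19_avoid [Nonempty Λ] (hnomax : ∀ ν : Λ, ∃ ρ : Λ, ν < ρ)
    {S : Set Λ} (hS : S.Finite) (N : Λ) :
    ∃ M : Λ, N ≤ M ∧ ∀ ν : Λ, M ≤ ν → ν ∉ S := by
  obtain ⟨b, hb⟩ := (hS.insert N).bddAbove
  obtain ⟨M, hM⟩ := hnomax b
  refine ⟨M, (hb (Set.mem_insert _ _)).trans hM.le, fun ν hν hmem => ?_⟩
  exact absurd ((hb (Set.mem_insert_of_mem _ hmem)).trans_lt (hM.trans_le hν)) (lt_irrefl ν)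

lemma stmt19_eval_eq (φ : RatFunc K) (a : K) :
    RatFunc.eval (RingHom.id K) a φ = φ.num.eval a / φ.denom.eval a := rfl

lemma stmt19_eval_div (p q : Polynomial K) (a : K) (hq : q.eval a ≠ 0) :
    RatFunc.eval (RingHom.id K) a
      (algebraMap (Polynomial K) (RatFunc K) p / algebraMap (Polynomial K) (RatFunc K) q) =
      p.eval a / q.eval a := by
  set φ := algebraMap (Polynomial K) (RatFunc K) p / algebraMap (Polynomial K) (RatFunc K) q
    with hφdef
  have hq0 : q ≠ 0 := fun h => hq (by simp [h])
  have hqm : algebraMap (Polynomial K) (RatFunc K) q ≠ 0 := RatFunc.algebraMap_ne_zero hq0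
  have hdm : algebraMap (Polynomial K) (RatFunc K) φ.denom ≠ 0 :=
    RatFunc.algebraMap_ne_zero φ.denom_ne_zero
  have h1 : algebraMap (Polynomial K) (RatFunc K) φ.num /
      algebraMap (Polynomial K) (RatFunc K) φ.denom =
      algebraMap (Polynomial K) (RatFunc K) p / algebraMap (Polynomial K) (RatFunc K) q :=
    RatFunc.num_div_denom φ
  rw [div_eq_div_iff hdm hqm, ← map_mul, ← map_mul] at h1
  have hkey : φ.num * q = p * φ.denom := RatFunc.algebraMap_injective K h1
  have hkey' : φ.num.eval a * q.eval a = p.eval a * φ.denom.eval a := by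
    have := congrArg (Polynomial.eval a) hkey
    simpa using this
  have hd : φ.denom.eval a ≠ 0 := by
    intro h0
    rw [h0, mul_zero] at hkey'
    have hnum0 : φ.num.eval a = 0 := by
      rcases mul_eq_zero.1 hkey' with h | h
      · exact h
      · exact absurd h hq
    obtain ⟨u, w', huw⟩ := φ.isCoprime_num_denom
    have := congrArg (Polynomial.eval a) huw
    simp [hnum0, h0] at this
  rw [stmt19_eval_eq]
  rw [div_eq_div_iff hd hq]
  exact hkey'


end Aux2

lemma stmt19_lem1 {K : Type*} [Field K] {Γ : Type*} [LinearOrderedCommGroupWithZero Γ]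
    (v : Valuation K Γ) {Λ : Type*} [LinearOrder Λ] [Nonempty Λ]
    (hnomax : ∀ ν : Λ, ∃ ρ : Λ, ν < ρ) (s t : Λ → K)
    (hE : IsPseudoStationary v s) (hF : IsPseudoStationary v t)
    (hsub : VESet v s ⊆ VESet v t) (κ : Λ) {ρ σ : Λ} (hρσ : ρ ≠ σ) :
    ∃ M : Λ, ∀ μ : Λ, M ≤ μ → v (t μ - s κ) = v (s ρ - s σ) := by
  obtain ⟨κ', hκ'⟩ := hnomax κ
  set e := s κ' - s κ with he
  have he0 : e ≠ 0 := sub_ne_zero.2 (hE.1 hκ'.ne')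
  have hve0 : v e ≠ 0 := v.ne_zero_iff.2 he0
  have hvs : ∀ {ν : Λ}, ν ≠ κ → v (s ν - s κ) = v e := fun {ν} hν => hE.2 hν hκ'.ne'
  have hev1 : ∀ a : K, RatFunc.eval (RingHom.id K) a
      (algebraMap (Polynomial K) (RatFunc K)
        (Polynomial.C e⁻¹ * (Polynomial.X - Polynomial.C (s κ)))) = e⁻¹ * (a - s κ) := by
    intro a
    rw [RatFunc.eval_algebraMap]
    simp [Algebra.algebraMap_self]
  have hle1 : ∀ x : K, x ≠ s κ → v (x - s κ) = v e → v (e⁻¹ * (x - s κ)) ≤ 1 := by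
    intro x _ hx
    rw [map_mul, map_inv₀, hx, inv_mul_cancel₀ hve0]
  have hφ1 : algebraMap (Polynomial K) (RatFunc K)
      (Polynomial.C e⁻¹ * (Polynomial.X - Polynomial.C (s κ))) ∈ VESet v s := by
    obtain ⟨M, _, hM⟩ := stmt19_avoid hnomax (Set.finite_singleton κ) κ
    refine ⟨M, fun ν hν => ?_⟩
    have hνκ : ν ≠ κ := fun h => hM ν hν (by rw [h]; exact Set.mem_singleton κ)
    rw [hev1]
    exact hle1 _ (hE.1 hνκ) (hvs hνκ)
  have hev2 : ∀ a : K, a ≠ s κ → RatFunc.eval (RingHom.id K) a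
      (algebraMap (Polynomial K) (RatFunc K) (Polynomial.C e) /
        algebraMap (Polynomial K) (RatFunc K) (Polynomial.X - Polynomial.C (s κ))) =
      e / (a - s κ) := by
    intro a ha
    rw [stmt19_eval_div _ _ _ (by simp [sub_ne_zero.2 ha])]
    simp
  have hφ2 : algebraMap (Polynomial K) (RatFunc K) (Polynomial.C e) /
      algebraMap (Polynomial K) (RatFunc K) (Polynomial.X - Polynomial.C (s κ)) ∈ VESet v s := by
    obtain ⟨M, _, hM⟩ := stmt19_avoid hnomax (Set.finite_singleton κ) κ
    refine ⟨M, fun ν hν => ?_⟩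
    have hνκ : ν ≠ κ := fun h => hM ν hν (by rw [h]; exact Set.mem_singleton κ)
    rw [hev2 _ (hE.1 hνκ), v.map_div]
    have hpos : (0 : Γ) < v (s ν - s κ) :=
      zero_lt_iff.2 (v.ne_zero_iff.2 (sub_ne_zero.2 (hE.1 hνκ)))
    exact (div_le_one₀ hpos).2 (le_of_eq (hvs hνκ).symm)
  obtain ⟨M1, hM1⟩ := hsub hφ1
  obtain ⟨M2, hM2⟩ := hsub hφ2
  have hsing : ({μ : Λ | t μ = s κ} : Set Λ).Subsingleton := by
    intro μ hμ μ' hμ'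
    by_contra hne
    exact hF.1 hne (hμ.trans hμ'.symm)
  obtain ⟨M3, _, hM3⟩ := stmt19_avoid hnomax hsing.finite M1
  refine ⟨max M1 (max M2 M3), fun μ hμ => ?_⟩
  have hμ1 : M1 ≤ μ := le_trans (le_max_left _ _) hμ
  have hμ2 : M2 ≤ μ := le_trans ((le_max_left _ _).trans (le_max_right _ _)) hμ
  have hμ3 : M3 ≤ μ := le_trans ((le_max_right _ _).trans (le_max_right _ _)) hμ
  have hne : t μ ≠ s κ := fun h => hM3 μ hμ3 h
  have h1 := hM1 hμ1
  rw [hev1, map_mul, map_inv₀] at h1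
  have h1' : v (t μ - s κ) ≤ v e := by
    calc v (t μ - s κ) = v e * ((v e)⁻¹ * v (t μ - s κ)) := by
          rw [← mul_assoc, mul_inv_cancel₀ hve0, one_mul]
    _ ≤ v e * 1 := mul_le_mul_right h1 _
    _ = v e := mul_one _
  have h2 := hM2 hμ2
  rw [hev2 _ hne, v.map_div] at h2
  have hpos : (0 : Γ) < v (t μ - s κ) :=
    zero_lt_iff.2 (v.ne_zero_iff.2 (sub_ne_zero.2 hne))
  have h2' : v e ≤ v (t μ - s κ) := (div_le_one₀ hpos).1 h2
  rw [show v (s ρ - s σ) = v e from hE.2 hρσ hκ'.ne']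
  exact le_antisymm h1' h2'

lemma stmt19_subset {K : Type*} [Field K] {Γ : Type*} [LinearOrderedCommGroupWithZero Γ]
    (v : Valuation K Γ) {Λ : Type*} [LinearOrder Λ] [Nonempty Λ]
    (hnomax : ∀ ν : Λ, ∃ ρ : Λ, ν < ρ) (s t : Λ → K)
    (hE : IsPseudoStationary v s) (hF : IsPseudoStationary v t)
    (hbr : ∀ ⦃ν μ ν' μ' : Λ⦄, ν ≠ μ → ν' ≠ μ' → v (s ν - s μ) = v (t ν' - t μ'))
    (hcross : ∀ ν μ : Λ, ∀ ⦃ρ σ : Λ⦄, ρ ≠ σ → v (s ν - t μ) ≤ v (s ρ - s σ)) :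
    VESet v s ⊆ VESet v t := by
  classical
  -- extend the valuation to the algebraic closure
  set L := AlgebraicClosure K with hL
  set i : K →+* L := algebraMap K L with hi
  set A := v.valuationSubring with hA
  obtain ⟨B, hB, hloc⟩ := IsLocalRing.exists_factor_valuationRing (i.comp A.subtype)
  set w : Valuation L B.ValueGroup := B.valuation with hw
  have key : ∀ x : K, v x ≤ 1 ↔ w (i x) ≤ 1 := by
    intro x
    constructor
    · intro hx
      exact (B.valuation_le_one_iff _).2 (hB ⟨x, hx⟩)
    · intro hx
      by_contra hv
      push_neg at hv
      have hx0 : x ≠ 0 := by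
        rintro rfl
        rw [map_zero] at hv
        exact absurd hv (not_lt.2 zero_le_one)
      have hvx0 : (0 : Γ) < v x := zero_lt_iff.2 (v.ne_zero_iff.2 hx0)
      have hxinvA : x⁻¹ ∈ A := by
        rw [hA, Valuation.mem_valuationSubring_iff, map_inv₀]
        rw [inv_le_one₀ hvx0]
        exact hv.le
      have hix : i x ∈ B := (B.valuation_le_one_iff _).1 hx
      have hix0 : i x ≠ 0 := fun h => hx0 (map_eq_zero i |>.1 h)
      have hunit : IsUnit (((i.comp A.subtype).codRestrict B.toSubring hB) ⟨x⁻¹, hxinvA⟩) := by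
        refine isUnit_iff_exists_inv.mpr ⟨⟨i x, hix⟩, ?_⟩
        ext
        show i x⁻¹ * i x = 1
        rw [map_inv₀, inv_mul_cancel₀ hix0]
      have huA : IsUnit (⟨x⁻¹, hxinvA⟩ : A) := hloc.1 _ hunit
      obtain ⟨b, hb⟩ := isUnit_iff_exists_inv.mp huA
      have hbx : (b : K) = x := by
        have := congrArg Subtype.val hb
        have h2 : x⁻¹ * (b : K) = 1 := this
        field_simp at h2
        exact h2.symm ▸ rfl
      have : v x ≤ 1 := by
        rw [← hbx]
        exact b.2
      exact absurd this (not_le.2 hv)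
  have hequiv : v.IsEquiv (w.comap i) := Valuation.isEquiv_iff_val_le_one.2 fun {x} => key x
  have hle : ∀ x y : K, v x ≤ v y ↔ w (i x) ≤ w (i y) := fun x y => hequiv x y
  have heq : ∀ x y : K, v x = v y → w (i x) = w (i y) := fun x y h =>
    le_antisymm ((hle x y).1 h.le) ((hle y x).1 h.ge)
  -- basic constants
  set ν₀ : Λ := Classical.arbitrary Λ with hν₀
  obtain ⟨ν₁, hν01⟩ := hnomax ν₀
  set δw : B.ValueGroup := w (i (s ν₀ - s ν₁)) with hδw
  have hδs : ∀ ⦃ν μ : Λ⦄, ν ≠ μ → w (i (s ν) - i (s μ)) = δw := by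
    intro ν μ h
    rw [← map_sub]
    exact heq _ _ (hE.2 h hν01.ne)
  have hδt : ∀ ⦃ν μ : Λ⦄, ν ≠ μ → w (i (t ν) - i (t μ)) = δw := by
    intro ν μ h
    rw [← map_sub]
    exact heq _ _ (hbr hν01.ne h).symm
  have hcross' : ∀ ν μ : Λ, w (i (s ν) - i (t μ)) ≤ δw := by
    intro ν μ
    rw [← map_sub]
    exact (hle _ _).1 (hcross ν μ hν01.ne)
  have addval : ∀ x y : L, w x < w y → w (x + y) = w y := by
    intro x y h
    rw [w.map_add_of_distinct_val (ne_of_lt h), max_eq_right h.le]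
  -- root lemma
  have root : ∀ a : L, ∃ c : B.ValueGroup,
      {ν : Λ | w (i (s ν) - a) ≠ c}.Subsingleton ∧
      {μ : Λ | w (i (t μ) - a) ≠ c}.Subsingleton := by
    intro a
    by_cases hex : ∃ ν₂ : Λ, δw < w (i (s ν₂) - a)
    · obtain ⟨ν₂, hν₂⟩ := hex
      refine ⟨w (i (s ν₂) - a), ?_, ?_⟩
      · intro ν hν ν' hν'
        exfalso
        apply hν
        rcases eq_or_ne ν ν₂ with rfl | hne
        · rfl
        · rw [← sub_add_sub_cancel (i (s ν)) (i (s ν₂)) a]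
          exact addval _ _ ((hδs hne).symm ▸ hν₂)
      · intro μ hμ μ' hμ'
        exfalso
        apply hμ
        rw [show i (t μ) - a = (i (t μ) - i (s ν₂)) + (i (s ν₂) - a) by ring]
        refine addval _ _ (lt_of_le_of_lt ?_ hν₂)
        rw [w.map_sub_swap]
        exact hcross' ν₂ μ
    · push_neg at hex
      have hta : ∀ μ : Λ, w (i (t μ) - a) ≤ δw := by
        intro μ
        by_contra hgt
        push_neg at hgt
        have h2 : w (i (s ν₀) - a) = w (i (t μ) - a) := by
          rw [← sub_add_sub_cancel (i (s ν₀)) (i (t μ)) a]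
          exact addval _ _ ((hcross' ν₀ μ).trans_lt hgt)
        rw [← h2] at hgt
        exact absurd hgt (not_lt.2 (hex ν₀))
      refine ⟨δw, ?_, ?_⟩
      · intro ν hν ν' hν'
        by_contra hne
        have h1 : w (i (s ν) - a) < δw := lt_of_le_of_ne (hex ν) hν
        have h2 : w (i (s ν') - a) < δw := lt_of_le_of_ne (hex ν') hν'
        have h3 : w (i (s ν) - i (s ν')) ≤ max (w (i (s ν) - a)) (w (i (s ν') - a)) := by
          rw [show i (s ν) - i (s ν') = (i (s ν) - a) - (i (s ν') - a) by ring]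
          exact w.map_sub _ _
        rw [hδs hne] at h3
        exact absurd h3 (not_le.2 (max_lt h1 h2))
      · intro ν hν ν' hν'
        by_contra hne
        have h1 : w (i (t ν) - a) < δw := lt_of_le_of_ne (hta ν) hν
        have h2 : w (i (t ν') - a) < δw := lt_of_le_of_ne (hta ν') hν'
        have h3 : w (i (t ν) - i (t ν')) ≤ max (w (i (t ν) - a)) (w (i (t ν') - a)) := by
          rw [show i (t ν) - i (t ν') = (i (t ν) - a) - (i (t ν') - a) by ring]
          exact w.map_sub _ _
        rw [hδt hne] at h3
        exact absurd h3 (not_le.2 (max_lt h1 h2))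
  choose c hcs hct using root
  -- polynomial lemma
  have flem : ∀ f : Polynomial K, ∃ cf : B.ValueGroup, ∃ S T : Set Λ, S.Finite ∧ T.Finite ∧
      (∀ ν ∉ S, w (i (f.eval (s ν))) = cf) ∧ (∀ μ ∉ T, w (i (f.eval (t μ))) = cf) := by
    intro f
    by_cases hf : f = 0
    · exact ⟨0, ∅, ∅, Set.finite_empty, Set.finite_empty,
        fun ν _ => by simp [hf], fun μ _ => by simp [hf]⟩
    set fL := f.map i with hfLdef
    have hfL : fL ≠ 0 := (Polynomial.map_ne_zero_iff i.injective).2 hf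
    have hsplit : fL.Splits := by
      exact IsAlgClosed.splits fL
    have hprod := Polynomial.Splits.eq_prod_roots hsplit
    set R := fL.roots with hR
    have hevals : ∀ z : L, w (fL.eval z) =
        w fL.leadingCoeff * (R.map (fun a => w (z - a))).prod := by
      intro z
      conv_lhs => rw [hprod]
      rw [Polynomial.eval_mul, Polynomial.eval_C, Polynomial.eval_multiset_prod, map_mul,
        Multiset.map_map]
      congr 1
      rw [map_multiset_prod, Multiset.map_map]
      congr 1
      ext a
      simp
    refine ⟨w fL.leadingCoeff * (R.map c).prod,
      ⋃ a ∈ R.toFinset, {ν : Λ | w (i (s ν) - a) ≠ c a},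
      ⋃ a ∈ R.toFinset, {μ : Λ | w (i (t μ) - a) ≠ c a},
      Set.Finite.biUnion R.toFinset.finite_toSet (fun a _ => (hcs a).finite),
      Set.Finite.biUnion R.toFinset.finite_toSet (fun a _ => (hct a).finite),
      ?_, ?_⟩
    · intro ν hν
      have hev : i (f.eval (s ν)) = fL.eval (i (s ν)) := by
        rw [hfLdef, Polynomial.eval_map, Polynomial.eval₂_at_apply]
      rw [hev, hevals]
      congr 1
      refine congrArg (Multiset.prod (M := B.ValueGroup)) (Multiset.map_congr rfl ?_)
      intro a ha
      have : ν ∉ {ν : Λ | w (i (s ν) - a) ≠ c a} := fun hmem =>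
        hν (Set.mem_biUnion (Multiset.mem_toFinset.2 ha) hmem)
      exact not_not.1 this
    · intro μ hμ
      have hev : i (f.eval (t μ)) = fL.eval (i (t μ)) := by
        rw [hfLdef, Polynomial.eval_map, Polynomial.eval₂_at_apply]
      rw [hev, hevals]
      congr 1
      refine congrArg (Multiset.prod (M := B.ValueGroup)) (Multiset.map_congr rfl ?_)
      intro a ha
      have : μ ∉ {μ : Λ | w (i (t μ) - a) ≠ c a} := fun hmem =>
        hμ (Set.mem_biUnion (Multiset.mem_toFinset.2 ha) hmem)
      exact not_not.1 this
  -- main argument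
  rintro φ ⟨N, hN⟩
  obtain ⟨cf, Sf, Tf, hSf, hTf, hfs, hft⟩ := flem φ.num
  obtain ⟨cg, Sg, Tg, hSg, hTg, hgs, hgt⟩ := flem φ.denom
  have hsinj : Function.Injective s := by
    intro a b h
    by_contra hne
    exact hE.1 hne h
  have hzfin : ({ν : Λ | φ.denom.eval (s ν) = 0} : Set Λ).Finite := by
    have : ({ν : Λ | φ.denom.eval (s ν) = 0} : Set Λ) ⊆
        s ⁻¹' {x : K | φ.denom.IsRoot x} := fun ν hν => hν
    exact Set.Finite.subset
      ((Polynomial.finite_setOf_isRoot φ.denom_ne_zero).preimage (Set.injOn_of_injective hsinj))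
      this
  obtain ⟨M, hMN, hMnot⟩ := stmt19_avoid hnomax ((hSf.union hSg).union hzfin) N
  have hMf : M ∉ Sf := fun h => hMnot M le_rfl (Or.inl (Or.inl h))
  have hMg : M ∉ Sg := fun h => hMnot M le_rfl (Or.inl (Or.inr h))
  have hMz : φ.denom.eval (s M) ≠ 0 := fun h => hMnot M le_rfl (Or.inr h)
  have hwit := hN hMN
  rw [stmt19_eval_eq, v.map_div] at hwit
  have hpos : (0 : Γ) < v (φ.denom.eval (s M)) := zero_lt_iff.2 (v.ne_zero_iff.2 hMz)
  have h1 : v (φ.num.eval (s M)) ≤ v (φ.denom.eval (s M)) := (div_le_one₀ hpos).1 hwit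
  have hcfg : cf ≤ cg := by
    have := (hle _ _).1 h1
    rwa [hfs M hMf, hgs M hMg] at this
  obtain ⟨M', _, hM'not⟩ := stmt19_avoid hnomax (hTf.union hTg) (Classical.arbitrary Λ)
  refine ⟨M', fun μ hμ => ?_⟩
  have hμf : μ ∉ Tf := fun h => hM'not μ hμ (Or.inl h)
  have hμg : μ ∉ Tg := fun h => hM'not μ hμ (Or.inr h)
  by_cases hgz : φ.denom.eval (t μ) = 0
  · rw [stmt19_eval_eq, hgz, div_zero, map_zero]
    exact zero_le_one
  · have h2 : w (i (φ.num.eval (t μ))) ≤ w (i (φ.denom.eval (t μ))) := by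
      rw [hft μ hμf, hgt μ hμg]
      exact hcfg
    have h3 : v (φ.num.eval (t μ)) ≤ v (φ.denom.eval (t μ)) := (hle _ _).2 h2
    rw [stmt19_eval_eq, v.map_div]
    have hpos' : (0 : Γ) < v (φ.denom.eval (t μ)) := zero_lt_iff.2 (v.ne_zero_iff.2 hgz)
    exact (div_le_one₀ hpos').2 h3

/-- Let `E = {s_ν}`, `F = {t_ν}` be pseudo-stationary sequences in `K` with
breadths `δ_E`, `δ_F`. Then `V_E = V_F` if and only if `δ_E = δ_F = δ` and
`v(s_ν − t_μ) ≥ δ` for all `ν, μ` (multiplicatively, `v(s_ν − t_μ) ≤ δ`). -/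
theorem stmt19 {K : Type*} [Field K] {Γ : Type*} [LinearOrderedCommGroupWithZero Γ]
    (v : Valuation K Γ) {Λ : Type*} [LinearOrder Λ] [WellFoundedLT Λ] [Nonempty Λ]
    (hnomax : ∀ ν : Λ, ∃ ρ : Λ, ν < ρ) (s t : Λ → K)
    (hE : IsPseudoStationary v s) (hF : IsPseudoStationary v t) :
    VESet v s = VESet v t ↔
      ((∀ ⦃ν μ ν' μ' : Λ⦄, ν ≠ μ → ν' ≠ μ' → v (s ν - s μ) = v (t ν' - t μ')) ∧
        ∀ ν μ : Λ, ∀ ⦃ρ σ : Λ⦄, ρ ≠ σ → v (s ν - t μ) ≤ v (s ρ - s σ)) := by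
  constructor
  · intro h
    have hsub1 : VESet v s ⊆ VESet v t := fun x hx => h ▸ hx
    have hsub2 : VESet v t ⊆ VESet v s := fun x hx => h ▸ hx
    have hbreq : ∀ ⦃ν μ ν' μ' : Λ⦄, ν ≠ μ → ν' ≠ μ' → v (s ν - s μ) = v (t ν' - t μ') := by
      intro ν μ ν' μ' hνμ hν'μ'
      obtain ⟨M, hM⟩ := stmt19_lem1 v hnomax s t hE hF hsub1 ν hνμ
      obtain ⟨M', hM'⟩ := stmt19_lem1 v hnomax t s hF hE hsub2 ν' hν'μ'
      obtain ⟨Ma, hMa⟩ := hnomax M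
      obtain ⟨Ma', hMa'⟩ := hnomax M'
      have e1 : v (t M - s ν) = v (s ν - s μ) := hM M le_rfl
      have e2 : v (t Ma - s ν) = v (s ν - s μ) := hM Ma hMa.le
      have e1' : v (s M' - t ν') = v (t ν' - t μ') := hM' M' le_rfl
      have e2' : v (s Ma' - t ν') = v (t ν' - t μ') := hM' Ma' hMa'.le
      have hFle : v (t ν' - t μ') ≤ v (s ν - s μ) := by
        have hd : v (t M - t Ma) ≤ max (v (t M - s ν)) (v (t Ma - s ν)) := by
          rw [show t M - t Ma = (t M - s ν) - (t Ma - s ν) by ring]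
          exact v.map_sub _ _
        rw [e1, e2, max_self] at hd
        rwa [hF.2 hMa.ne hν'μ'] at hd
      have hEle : v (s ν - s μ) ≤ v (t ν' - t μ') := by
        have hd : v (s M' - s Ma') ≤ max (v (s M' - t ν')) (v (s Ma' - t ν')) := by
          rw [show s M' - s Ma' = (s M' - t ν') - (s Ma' - t ν') by ring]
          exact v.map_sub _ _
        rw [e1', e2', max_self] at hd
        rwa [hE.2 hMa'.ne hνμ] at hd
      exact le_antisymm hEle hFle
    refine ⟨hbreq, ?_⟩
    intro ν μ ρ σ hρσ
    obtain ⟨M, hM⟩ := stmt19_lem1 v hnomax s t hE hF hsub1 ν hρσ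
    have e1 : v (t M - s ν) = v (s ρ - s σ) := hM M le_rfl
    have h2 : v (t M - t μ) ≤ v (s ρ - s σ) := by
      rcases eq_or_ne M μ with rfl | hne
      · simp only [sub_self, map_zero]
        exact zero_le'
      · exact le_of_eq (hbreq hρσ hne).symm
    have h3 : v (s ν - t μ) ≤ max (v (s ν - t M)) (v (t M - t μ)) := by
      rw [show s ν - t μ = (s ν - t M) + (t M - t μ) by ring]
      exact v.map_add _ _
    refine h3.trans (max_le ?_ h2)
    rw [v.map_sub_swap, e1]
  · rintro ⟨hbr, hcross⟩
    have hbr' : ∀ ⦃ν μ ν' μ' : Λ⦄, ν ≠ μ → ν' ≠ μ' → v (t ν - t μ) = v (s ν' - s μ') :=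
      fun ν μ ν' μ' hn hn' => (hbr hn' hn).symm
    have hcross' : ∀ ν μ : Λ, ∀ ⦃ρ σ : Λ⦄, ρ ≠ σ → v (t ν - s μ) ≤ v (t ρ - t σ) := by
      intro ν μ ρ σ hn
      rw [v.map_sub_swap]
      exact (hcross μ ν hn).trans (le_of_eq (hbr hn hn))
    exact Set.Subset.antisymm (stmt19_subset v hnomax s t hE hF hbr hcross)
      (stmt19_subset v hnomax t s hF hE hbr' hcross')
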